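/- For all words x, y ∈ I, dim_q(xy) ≥ q^{−|y|}·dim_q(x), where xy denotes the concatenation of the words x and y. -/

import Mathlib

open Filter Topology MeasureTheory

/-- Words in the free monoid on two letters `α = true`, `β = false`. -/
abbrev Word := List Bool

/-- Conjugation: reverse the word and swap the two letters. -/
def wconj (x : Word) : Word := x.reverse.map (fun b => !b)

/-- Fusion multiplicity `m(z; x, y)`: the number of triples `(x₀, w, y₀)` with
`x = x₀w`, `y = w̄y₀` and `z = x₀y₀`. -/
def fm (x y z : Word) : ℕ :=
  ((Finset.range (x.length + 1)).filter (fun k =>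
    wconj (x.drop k) <+: y ∧ z = x.take k ++ y.drop (x.length - k))).card

/-- Maximal alternating blocks of a word. -/
def blocks : Word → List Word
  | [] => []
  | a :: rest =>
    match blocks rest with
    | [] => [[a]]
    | b :: bs => if b.head? = some a then [a] :: b :: bs else (a :: b) :: bs

/-- The quantum integer `[n]_q = (qⁿ - q⁻ⁿ)/(q - q⁻¹)`. -/
noncomputable def qnum (q : ℝ) (n : ℕ) : ℝ := (q ^ n - q⁻¹ ^ n) / (q - q⁻¹)

/-- Quantum dimension `dim_q(x) = ∏ᵢ [|xᵢ|+1]_q` over the maximal alternating blocks. -/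
noncomputable def dimq (q : ℝ) (x : Word) : ℝ :=
  ((blocks x).map (fun b => qnum q (b.length + 1))).prod

/-- Classical dimension `dim₁(x) = ∏ᵢ (|xᵢ|+1)` over the maximal alternating blocks. -/
def dim1 (x : Word) : ℕ := ((blocks x).map (fun b => b.length + 1)).prod

section Aux
variable (q : ℝ) (hq0 : 0 < q) (hq1 : q < 1)

noncomputable def go : Bool → ℕ → Word → ℝ
  | _, n, [] => qnum q (n+1)
  | b, n, a :: x => if a = b then qnum q (n+1) * go a 1 x else go a (n+1) x

include hq0 hq1

lemma sub_inv_neg : q - q⁻¹ < 0 := by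
  have : (1:ℝ) < q⁻¹ := (one_lt_inv₀ hq0).mpr hq1
  linarith

lemma sub_inv_ne : q - q⁻¹ ≠ 0 := ne_of_lt (sub_inv_neg q hq0 hq1)

lemma qnum_pos (n : ℕ) : 0 < qnum q (n+1) := by
  have h1 : q ^ (n+1) < 1 := pow_lt_one₀ (le_of_lt hq0) hq1 (Nat.succ_ne_zero n)
  have h2 : (1:ℝ) < q⁻¹ ^ (n+1) := one_lt_pow₀ ((one_lt_inv₀ hq0).mpr hq1) (Nat.succ_ne_zero n)
  have h4 : q ^ (n+1) - q⁻¹ ^ (n+1) < 0 := by linarith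
  exact div_pos_of_neg_of_neg h4 (sub_inv_neg q hq0 hq1)

lemma qnum_two : qnum q 2 = q + q⁻¹ := by
  have hq : q ≠ 0 := ne_of_gt hq0
  have key : q ^ 2 - q⁻¹ ^ 2 = (q + q⁻¹) * (q - q⁻¹) := by field_simp; ring
  rw [qnum, key, mul_div_cancel_right₀ _ (sub_inv_ne q hq0 hq1)]

lemma qnum_succ (n : ℕ) : qnum q (n+2) = q⁻¹ * qnum q (n+1) + q^(n+1) := by
  have hq : q ≠ 0 := ne_of_gt hq0
  have key : q ^ (n+2) - q⁻¹ ^ (n+2)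
      = q⁻¹ * (q ^ (n+1) - q⁻¹ ^ (n+1)) + q^(n+1) * (q - q⁻¹) := by
    ring
  rw [qnum, qnum, key, add_div, mul_div_assoc,
    mul_div_cancel_right₀ _ (sub_inv_ne q hq0 hq1)]

lemma go_pos : ∀ (x : Word) (b : Bool) (n : ℕ), 0 < go q b n x := by
  intro x
  induction x with
  | nil => intro b n; exact qnum_pos q hq0 hq1 n
  | cons a x ih =>
    intro b n
    simp only [go]
    split
    · exact mul_pos (qnum_pos q hq0 hq1 n) (ih a 1)
    · exact ih a (n+1)

lemma qnum_two_ge : q⁻¹ ≤ qnum q 2 := by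
  rw [qnum_two q hq0 hq1]; linarith

lemma qnum_succ_ge (n : ℕ) : q⁻¹ * qnum q (n+1) ≤ qnum q (n+2) := by
  rw [qnum_succ q hq0 hq1 n]
  have : 0 < q ^ (n+1) := pow_pos hq0 _
  linarith

lemma go_nil_bound : ∀ (y : Word) (b : Bool) (n : ℕ),
    (q⁻¹)^y.length * qnum q (n+1) ≤ go q b n y := by
  intro y
  induction y with
  | nil => intro b n; simp [go]
  | cons a y ih =>
    intro b n
    have hinv : (0:ℝ) < q⁻¹ := inv_pos.mpr hq0
    have hp : (0:ℝ) < (q⁻¹)^y.length := pow_pos hinv _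
    simp only [go, List.length_cons, pow_succ]
    split
    · have h1 : q⁻¹ ^ y.length * qnum q 2 ≤ go q a 1 y := by
        simpa using ih a 1
      have h2 := qnum_two_ge q hq0 hq1
      have h3 := qnum_pos q hq0 hq1 n
      have h4 := qnum_pos q hq0 hq1 1
      nlinarith [mul_le_mul_of_nonneg_right h1 h3.le,
        mul_le_mul_of_nonneg_right (mul_le_mul_of_nonneg_left h2 hp.le) h3.le]
    · have h1 := ih a (n+1)
      have h2 := qnum_succ_ge q hq0 hq1 n
      nlinarith

lemma go_append (y : Word) : ∀ (x : Word) (b : Bool) (n : ℕ),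
    (q⁻¹)^y.length * go q b n x ≤ go q b n (x ++ y) := by
  intro x
  induction x with
  | nil => intro b n; simpa [go] using go_nil_bound q hq0 hq1 y b n
  | cons a x ih =>
    intro b n
    simp only [List.cons_append, go, List.append_eq]
    split
    · have h1 := ih a 1
      have h3 := qnum_pos q hq0 hq1 n
      nlinarith [go_pos q hq0 hq1 x a 1]
    · simpa using ih a (n+1)

end Aux

lemma blocks_cons_exists (a : Bool) (x : Word) :
    ∃ t bs, blocks (a :: x) = t :: bs ∧ t.head? = some a := by
  cases h : blocks x with
  | nil => exact ⟨[a], [], by simp [blocks, h], rfl⟩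
  | cons t bs =>
    by_cases hh : t.head? = some a
    · exact ⟨[a], t :: bs, by simp [blocks, h, hh], rfl⟩
    · exact ⟨a :: t, bs, by simp [blocks, h, hh], rfl⟩

noncomputable def rhs (q : ℝ) (b : Bool) (n : ℕ) (x : Word) : ℝ :=
  match blocks x with
  | [] => qnum q (n+1)
  | t :: bs =>
    if t.head? = some b then
      qnum q (n+1) * ((t :: bs).map (fun u => qnum q (u.length+1))).prod
    else qnum q (n + t.length + 1) * (bs.map (fun u => qnum q (u.length+1))).prod

lemma rhs_of_blocks (q : ℝ) (b : Bool) (n : ℕ) {x : Word} {t : Word} {bs : List Word}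
    (h : blocks x = t :: bs) :
    rhs q b n x =
      if t.head? = some b then
        qnum q (n+1) * ((t :: bs).map (fun u => qnum q (u.length+1))).prod
      else qnum q (n + t.length + 1) * (bs.map (fun u => qnum q (u.length+1))).prod := by
  unfold rhs
  rw [h]

lemma blocks_cons (a : Bool) (x : Word) :
    blocks (a :: x) = match blocks x with
      | [] => [[a]]
      | b :: bs => if b.head? = some a then [a] :: b :: bs else (a :: b) :: bs := rfl

lemma go_eq (q : ℝ) : ∀ (x : Word) (b : Bool) (n : ℕ), go q b n x = rhs q b n x := by
  intro x
  induction x with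
  | nil => intro b n; simp [go, rhs, blocks]
  | cons a x ih =>
    intro b n
    have hgo : go q b n (a :: x)
        = if a = b then qnum q (n+1) * go q a 1 x else go q a (n+1) x := rfl
    rw [hgo, ih a 1, ih a (n+1)]
    cases x with
    | nil =>
      have hba : blocks [a] = [[a]] := rfl
      rw [rhs_of_blocks q b n hba]
      by_cases hab : a = b <;>
        simp [hab, rhs, blocks]
    | cons c x' =>
      obtain ⟨t, bs, hb, hh⟩ := blocks_cons_exists c x'
      have hba : blocks (a :: c :: x')
          = if t.head? = some a then [a] :: t :: bs else (a :: t) :: bs := by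
        rw [blocks_cons a (c :: x'), hb]
      by_cases hca : c = a
      · have ht : t.head? = some a := by rw [hh, hca]
        rw [ht, if_pos rfl] at hba
        rw [rhs_of_blocks q b n hba, rhs_of_blocks q a 1 hb, rhs_of_blocks q a (n+1) hb]
        rcases eq_or_ne a b with hab | hab
        · subst hab; simp [ht, mul_assoc]
        · simp [hab, ht]
      · have ht : ¬ t.head? = some a := by rw [hh]; simp [hca]
        rw [if_neg ht] at hba
        rw [rhs_of_blocks q b n hba, rhs_of_blocks q a 1 hb, rhs_of_blocks q a (n+1) hb]
        have e1 : 1 + t.length + 1 = t.length + 1 + 1 := by omega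
        have e2 : n + 1 + t.length + 1 = n + (t.length + 1) + 1 := by omega
        rcases eq_or_ne a b with hab | hab
        · subst hab; simp [ht, e1, mul_assoc]
        · simp [hab, ht, e2]

lemma dimq_cons (q : ℝ) (a : Bool) (x : Word) : dimq q (a :: x) = go q a 1 x := by
  rw [go_eq]
  cases x with
  | nil => simp [dimq, blocks, rhs]
  | cons c x' =>
    obtain ⟨t, bs, hb, hh⟩ := blocks_cons_exists c x'
    have hba : blocks (a :: c :: x')
        = if t.head? = some a then [a] :: t :: bs else (a :: t) :: bs := by
      rw [blocks_cons a (c :: x'), hb]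
    rw [rhs_of_blocks q a 1 hb]
    by_cases ht : t.head? = some a
    · rw [if_pos ht] at hba
      simp [dimq, hba, ht, mul_assoc]
    · rw [if_neg ht] at hba
      have e1 : 1 + t.length + 1 = t.length + 1 + 1 := by omega
      simp [dimq, hba, ht, e1]

/-- `dim_q(xy) ≥ q^{-|y|}·dim_q(x)` for all words `x, y`. -/
theorem dimq_concat_lower_bound (q : ℝ) (hq0 : 0 < q) (hq1 : q < 1) (x y : Word) :
    dimq q (x ++ y) ≥ q ^ (-(y.length : ℤ)) * dimq q x := by
  have hz : q ^ (-(y.length : ℤ)) = (q⁻¹) ^ y.length := by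
    rw [zpow_neg, zpow_natCast, inv_pow]
  rw [ge_iff_le, hz]
  cases x with
  | nil =>
    simp only [List.nil_append]
    have hd : dimq q [] = 1 := by simp [dimq, blocks]
    rw [hd, mul_one]
    cases y with
    | nil => simp [dimq, blocks]
    | cons a y' =>
      rw [dimq_cons]
      have h1 : (q⁻¹) ^ y'.length * qnum q 2 ≤ go q a 1 y' := by
        simpa using go_nil_bound q hq0 hq1 y' a 1
      have h2 := qnum_two_ge q hq0 hq1
      have hp : (0:ℝ) < (q⁻¹) ^ y'.length := pow_pos (inv_pos.mpr hq0) _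
      have hl : (q⁻¹) ^ (a :: y').length = (q⁻¹) ^ y'.length * q⁻¹ := by
        simp [pow_succ]
      rw [hl]
      calc (q⁻¹) ^ y'.length * q⁻¹ ≤ (q⁻¹) ^ y'.length * qnum q 2 := by nlinarith
        _ ≤ go q a 1 y' := h1
  | cons a x' =>
    rw [List.cons_append, dimq_cons, dimq_cons]
    exact go_append q hq0 hq1 y x' a 1
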